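/- If A is an m×n integer matrix of full rank with H = max_{i,j}|A_{ij}|, then cond(A) = σ_max(A)/σ_min(A) ≤ n^(n/4+1/2) · m^(n/2) · H^n. -/

import Mathlib

open Matrix Finset
open scoped RealInnerProductSpace


/-- Largest singular value: the supremum of `‖A x‖` over unit vectors `x`. -/
noncomputable def sigmaMax {m n : ℕ} (A : Matrix (Fin m) (Fin n) ℝ) : ℝ :=
  sSup ((fun x : EuclideanSpace ℝ (Fin n) => ‖Matrix.toEuclideanLin A x‖) '' {x | ‖x‖ = 1})

/-- Smallest singular value: the infimum of `‖A x‖` over unit vectors `x`. -/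
noncomputable def sigmaMin {m n : ℕ} (A : Matrix (Fin m) (Fin n) ℝ) : ℝ :=
  sInf ((fun x : EuclideanSpace ℝ (Fin n) => ‖Matrix.toEuclideanLin A x‖) '' {x | ‖x‖ = 1})

/-- The maximum absolute value of the entries of an integer matrix. -/
def maxEntry {m n : ℕ} (A : Matrix (Fin m) (Fin n) ℤ) : ℕ :=
  (Finset.univ ×ˢ Finset.univ).sup fun p : Fin m × Fin n => (A p.1 p.2).natAbs

section Aux

variable {m n : ℕ}

lemma normsq_eq (A : Matrix (Fin m) (Fin n) ℝ) (x : EuclideanSpace ℝ (Fin n)) :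
    ‖Matrix.toEuclideanLin A x‖ ^ 2
      = ∑ i, (A *ᵥ (WithLp.equiv 2 (Fin n → ℝ) x)) i ^ 2 := by
  rw [toEuclideanLin_apply, EuclideanSpace.norm_eq, Real.sq_sqrt (by positivity)]
  simp [sq_abs]

lemma sum_sq_of_unit {x : EuclideanSpace ℝ (Fin n)} (hx : ‖x‖ = 1) :
    ∑ i, (x i) ^ 2 = 1 := by
  have h := EuclideanSpace.norm_eq x
  rw [hx] at h
  have h3 : (∑ i, ‖x i‖ ^ 2) = 1 := Real.sqrt_eq_one.mp h.symm
  simpa [Real.norm_eq_abs, sq_abs] using h3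

lemma frobenius_bound (A : Matrix (Fin m) (Fin n) ℝ) {x : EuclideanSpace ℝ (Fin n)}
    (hx : ‖x‖ = 1) :
    ‖Matrix.toEuclideanLin A x‖ ^ 2 ≤ ∑ i, ∑ j, A i j ^ 2 := by
  rw [normsq_eq]
  refine Finset.sum_le_sum fun i _ => ?_
  have hcs := Finset.sum_mul_sq_le_sq_mul_sq Finset.univ (fun j => A i j) (fun j => x j)
  calc (A *ᵥ (WithLp.equiv 2 (Fin n → ℝ) x)) i ^ 2
      = (∑ j, A i j * x j) ^ 2 := by rfl
    _ ≤ (∑ j, A i j ^ 2) * (∑ j, x j ^ 2) := hcs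
    _ = ∑ j, A i j ^ 2 := by rw [sum_sq_of_unit hx, mul_one]

lemma normsq_eq_inner (A : Matrix (Fin m) (Fin n) ℝ) (x : EuclideanSpace ℝ (Fin n)) :
    ‖Matrix.toEuclideanLin A x‖ ^ 2
      = ⟪x, Matrix.toEuclideanLin (Aᴴ * A) x⟫ := by
  rw [toEuclideanLin_apply, toEuclideanLin_apply, EuclideanSpace.norm_eq,
    Real.sq_sqrt (by positivity)]
  rw [PiLp.inner_apply]
  set v : Fin n → ℝ := WithLp.equiv 2 (Fin n → ℝ) x with hv
  have h1 : ∑ j, x j * ((WithLp.equiv 2 (Fin n → ℝ)).symm ((Aᴴ * A) *ᵥ v)) j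
      = v ⬝ᵥ ((Aᴴ * A) *ᵥ v) := rfl
  have h2 : v ⬝ᵥ ((Aᴴ * A) *ᵥ v) = (A *ᵥ v) ⬝ᵥ (A *ᵥ v) := by
    have hw : v ᵥ* Aᴴ = A *ᵥ v := by rw [vecMul_conjTranspose]; simp
    rw [dotProduct_mulVec, ← vecMul_vecMul, hw, ← dotProduct_mulVec]
  simp only [RCLike.inner_apply, conj_trivial]
  have h3 : ∑ x_1, ((Aᴴ * A) *ᵥ x.ofLp) x_1 * x.ofLp x_1 = v ⬝ᵥ ((Aᴴ * A) *ᵥ v) := by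
    rw [dotProduct_comm]; rfl
  rw [h3, h2]
  simp [dotProduct, sq_abs, sq, hv]

variable {B : Matrix (Fin n) (Fin n) ℝ}

lemma eigen_apply (hB : B.IsHermitian) (j : Fin n) :
    Matrix.toEuclideanLin B (hB.eigenvectorBasis j)
      = hB.eigenvalues j • hB.eigenvectorBasis j := by
  have h := hB.mulVec_eigenvectorBasis j
  rw [toEuclideanLin_apply]
  apply (WithLp.equiv 2 (Fin n → ℝ)).symm_apply_eq.mpr
  rw [h]
  rfl

lemma inner_eigen (hB : B.IsHermitian) (x : EuclideanSpace ℝ (Fin n)) :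
    ⟪x, Matrix.toEuclideanLin B x⟫
      = ∑ j, hB.eigenvalues j * (hB.eigenvectorBasis.repr x j) ^ 2 := by
  have hx : Matrix.toEuclideanLin B x
      = ∑ j, (hB.eigenvectorBasis.repr x j * hB.eigenvalues j) • hB.eigenvectorBasis j := by
    conv_lhs => rw [← hB.eigenvectorBasis.sum_repr x]
    rw [map_sum]
    refine Finset.sum_congr rfl fun j _ => ?_
    rw [_root_.map_smul, eigen_apply hB j, smul_smul]
  rw [hx, inner_sum]
  refine Finset.sum_congr rfl fun j _ => ?_
  rw [real_inner_smul_right, real_inner_comm, ← OrthonormalBasis.repr_apply_apply]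
  ring

lemma trace_eq_sum_eigen (hB : B.IsHermitian) : B.trace = ∑ j, hB.eigenvalues j := by
  conv_lhs => rw [hB.spectral_theorem, Unitary.conjStarAlgAut_apply]
  rw [trace_mul_cycle]
  have h1 : (star (hB.eigenvectorUnitary : Matrix (Fin n) (Fin n) ℝ))
      * (hB.eigenvectorUnitary : Matrix (Fin n) (Fin n) ℝ) = 1 :=
    Unitary.star_mul_self_of_mem hB.eigenvectorUnitary.2
  rw [h1, one_mul, trace_diagonal]
  simp

lemma amgm (s : Finset (Fin n)) (f : Fin n → ℝ) (hf : ∀ i ∈ s, 0 ≤ f i) :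
    ∏ i ∈ s, f i ≤ ((∑ i ∈ s, f i) / s.card) ^ s.card := by
  rcases Finset.eq_empty_or_nonempty s with rfl | hs
  · simp
  have hk : (0:ℝ) < s.card := by exact_mod_cast Finset.card_pos.mpr hs
  have hw : ∑ _i ∈ s, (1:ℝ)/s.card = 1 := by
    rw [Finset.sum_const, nsmul_eq_mul]; field_simp
  have h := Real.geom_mean_le_arith_mean_weighted s (fun _ => (1:ℝ)/s.card) f
    (fun i _ => by positivity) hw hf
  have hsum : ∑ i ∈ s, ((1:ℝ)/s.card) * f i = (∑ i ∈ s, f i) / s.card := by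
    rw [Finset.sum_div]; exact Finset.sum_congr rfl fun i _ => by ring
  rw [hsum] at h
  have hL : 0 ≤ ∏ i ∈ s, f i ^ ((1:ℝ)/(s.card:ℝ)) :=
    Finset.prod_nonneg fun i hi => Real.rpow_nonneg (hf i hi) _
  have h2 := pow_le_pow_left₀ hL h s.card
  calc ∏ i ∈ s, f i
      = (∏ i ∈ s, f i ^ ((1:ℝ)/(s.card:ℝ))) ^ s.card := by
        rw [← Finset.prod_pow]
        refine (Finset.prod_congr rfl fun i hi => ?_).symm
        rw [← Real.rpow_natCast (f i ^ ((1:ℝ)/(s.card:ℝ))) s.card,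
          ← Real.rpow_mul (hf i hi)]
        rw [one_div, inv_mul_cancel₀ hk.ne', Real.rpow_one]
    _ ≤ _ := h2

lemma key_ineq (n : ℕ) (hn : 1 ≤ n) :
    ((n:ℝ)) ^ n ≤ (n:ℝ) ^ ((n:ℝ)/2 + 1) * ((n:ℝ) - 1) ^ (n - 1) := by
  match n, hn with
  | 1, _ => norm_num
  | 2, _ =>
      have : ((2:ℕ):ℝ) ^ ((2:ℝ)/2 + 1) = 4 := by
        rw [show (2:ℝ)/2 + 1 = ((2:ℕ):ℝ) by norm_num, Real.rpow_natCast]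
        norm_num
      push_cast at this ⊢
      rw [this]; norm_num
  | (k+3), _ =>
      set n := k + 3 with hn3
      have hnR : (3:ℝ) ≤ (n:ℝ) := by exact_mod_cast Nat.le_add_left 3 k
      have hpos : (0:ℝ) < (n:ℝ) := by linarith
      have hm1 : (1:ℝ) ≤ (n:ℝ) - 1 := by linarith
      have hm1pos : (0:ℝ) < (n:ℝ) - 1 := by linarith
      set j := n - 1 with hj
      have hjR : ((j:ℕ):ℝ) = (n:ℝ) - 1 := by
        have : (1:ℕ) ≤ n := by omega
        push_cast [hj, this]; ring
      have e1 : ((n:ℝ)/((n:ℝ)-1))^j ≤ Real.exp 1 := by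
        have hrw : (n:ℝ)/((n:ℝ)-1) = 1 + 1/((n:ℝ)-1) := by field_simp; ring
        rw [hrw]
        have h1 : 1 + 1/((n:ℝ)-1) ≤ Real.exp (1/((n:ℝ)-1)) := by
          have := Real.add_one_le_exp (1/((n:ℝ)-1)); linarith
        calc (1 + 1/((n:ℝ)-1))^j ≤ Real.exp (1/((n:ℝ)-1)) ^ j :=
              pow_le_pow_left₀ (by positivity) h1 j
          _ = Real.exp ((j:ℝ) * (1/((n:ℝ)-1))) := by
              rw [← Real.exp_nat_mul]
          _ = Real.exp 1 := by
              congr 1; rw [hjR]; field_simp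
      have e2 : Real.exp 1 ≤ (n:ℝ)^((n:ℝ)/2) := by
        have h3 : Real.exp 1 ≤ 3 := by
          have := Real.exp_one_lt_d9; linarith
        calc Real.exp 1 ≤ 3 := h3
          _ ≤ (n:ℝ) := hnR
          _ = (n:ℝ) ^ (1:ℝ) := (Real.rpow_one _).symm
          _ ≤ (n:ℝ)^((n:ℝ)/2) :=
            Real.rpow_le_rpow_of_exponent_le (by linarith) (by linarith)
      have e3 : (n:ℝ)^j ≤ ((n:ℝ)-1)^j * (n:ℝ)^((n:ℝ)/2) := by
        have hsplit : (n:ℝ) = ((n:ℝ)-1) * ((n:ℝ)/((n:ℝ)-1)) := by field_simp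
        calc (n:ℝ)^j = (((n:ℝ)-1) * ((n:ℝ)/((n:ℝ)-1)))^j := by rw [← hsplit]
          _ = ((n:ℝ)-1)^j * ((n:ℝ)/((n:ℝ)-1))^j := mul_pow _ _ _
          _ ≤ ((n:ℝ)-1)^j * (n:ℝ)^((n:ℝ)/2) := by
              refine mul_le_mul_of_nonneg_left (e1.trans e2) (by positivity)
      have hpow : (n:ℝ)^n = (n:ℝ)^j * (n:ℝ) := by
        rw [hj, show n = (n-1) + 1 by omega, pow_succ]
        norm_num
      have hr : (n:ℝ) ^ ((n:ℝ)/2 + 1) = (n:ℝ)^((n:ℝ)/2) * (n:ℝ) := by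
        rw [Real.rpow_add hpos, Real.rpow_one]
      rw [hpow, hr]
      calc (n:ℝ)^j * (n:ℝ) ≤ (((n:ℝ)-1)^j * (n:ℝ)^((n:ℝ)/2)) * (n:ℝ) :=
            mul_le_mul_of_nonneg_right e3 (by positivity)
        _ = (n:ℝ)^((n:ℝ)/2) * (n:ℝ) * ((n:ℝ)-1)^j := by ring

end Aux

/-- If `A` is an `m × n` integer matrix of full rank (`m ≥ n`), then
`cond A = σ_max(A)/σ_min(A) ≤ n^(n/4+1/2) m^(n/2) H^n` with `H = max |A i j|`. -/
theorem stmt4 {m n : ℕ} (hmn : n ≤ m) (A : Matrix (Fin m) (Fin n) ℤ)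
    (hrank : (A.map (Int.cast : ℤ → ℝ)).rank = n) :
    sigmaMax (A.map (Int.cast : ℤ → ℝ)) / sigmaMin (A.map (Int.cast : ℤ → ℝ)) ≤
      (n : ℝ) ^ ((n : ℝ) / 4 + 1 / 2) * (m : ℝ) ^ ((n : ℝ) / 2) * (maxEntry A : ℝ) ^ n := by
  rcases Nat.eq_zero_or_pos n with rfl | hn
  · have hempty : {x : EuclideanSpace ℝ (Fin 0) | ‖x‖ = 1} = ∅ := by
      ext x
      simp [Subsingleton.elim x 0]
    rw [sigmaMax, sigmaMin, hempty]
    simp only [Set.image_empty, Real.sSup_empty, Real.sInf_empty]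
    rw [div_zero]  -- maybe 0/0
    positivity
  · set A' := A.map (Int.cast : ℤ → ℝ) with hA'
    have hB : (A'ᴴ * A').IsHermitian := isHermitian_conjTranspose_mul_self A'
    set lam := hB.eigenvalues with hlam
    set H := ((maxEntry A : ℕ) : ℝ) with hH
    set S := (n:ℝ) * (m:ℝ) * H^2 with hS
    have hm1 : 1 ≤ m := le_trans hn hmn
    -- entry bound
    have hentry : ∀ i j, (A' i j)^2 ≤ H^2 := by
      intro i j
      have h1 : (A i j).natAbs ≤ maxEntry A :=
        Finset.le_sup (f := fun p : Fin m × Fin n => (A p.1 p.2).natAbs)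
          (by simp : (i,j) ∈ Finset.univ ×ˢ Finset.univ)
      have h2 : |A' i j| ≤ H := by
        rw [hA', hH]
        simp only [Matrix.map_apply]
        rw [← Int.cast_abs, Int.abs_eq_natAbs]
        exact_mod_cast h1
      calc (A' i j)^2 = |A' i j|^2 := (sq_abs _).symm
        _ ≤ H^2 := pow_le_pow_left₀ (abs_nonneg _) h2 2
    -- Frobenius sum bound
    have hfro : (∑ i, ∑ j, A' i j ^ 2) ≤ S := by
      calc ∑ i, ∑ j, A' i j ^ 2 ≤ ∑ _i : Fin m, ∑ _j : Fin n, H^2 :=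
            Finset.sum_le_sum fun i _ => Finset.sum_le_sum fun j _ => hentry i j
        _ = (m:ℝ) * ((n:ℝ) * H^2) := by
            simp [Finset.sum_const, nsmul_eq_mul]
        _ = S := by rw [hS]; ring
    -- trace
    have htrace : ∑ j, lam j = ∑ i, ∑ j, A' i j ^ 2 := by
      rw [hlam, ← trace_eq_sum_eigen hB, Matrix.trace]
      rw [Finset.sum_comm]
      refine Finset.sum_congr rfl fun j _ => ?_
      simp [Matrix.diag, Matrix.mul_apply, Matrix.conjTranspose_apply, sq]
    -- eigenvalues positive
    have hlampos : ∀ i, 0 < lam i := by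
      classical
      have h0 : ∀ i, 0 ≤ lam i := fun i =>
        (posSemidef_conjTranspose_mul_self A').eigenvalues_nonneg i
      have hrankB : (A'ᴴ * A').rank = n := by rw [rank_conjTranspose_mul_self]; exact hrank
      have hcard := hB.rank_eq_card_non_zero_eigs
      rw [hrankB] at hcard
      have h1 : (Finset.univ.filter (fun i => lam i ≠ 0)).card = Fintype.card (Fin n) := by
        rw [← Fintype.card_subtype, ← hcard, Fintype.card_fin]
      have h2 := Finset.eq_univ_of_card _ h1
      intro i
      have h3 : i ∈ Finset.univ.filter (fun i => lam i ≠ 0) := by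
        rw [h2]; exact Finset.mem_univ i
      exact lt_of_le_of_ne (h0 i) (Ne.symm (Finset.mem_filter.mp h3).2)
    -- product of eigenvalues at least 1
    have hprod : 1 ≤ ∏ i, lam i := by
      have hmap : A'ᴴ * A' = (Aᵀ * A : Matrix (Fin n) (Fin n) ℤ).map (Int.cast : ℤ → ℝ) := by
        ext i j
        simp only [hA', Matrix.mul_apply, Matrix.conjTranspose_apply, Matrix.map_apply,
          Matrix.transpose_apply, star_trivial]
        push_cast
        rfl
      have hdet : (A'ᴴ * A').det = (((Aᵀ * A : Matrix (Fin n) (Fin n) ℤ).det : ℤ) : ℝ) := by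
        rw [hmap]
        rw [show (Aᵀ * A : Matrix (Fin n) (Fin n) ℤ).map (Int.cast : ℤ → ℝ)
            = (Int.castRingHom ℝ).mapMatrix (Aᵀ * A : Matrix (Fin n) (Fin n) ℤ) from rfl,
          ← RingHom.map_det]
        rfl
      have hdetprod : (A'ᴴ * A').det = ∏ i, lam i := by
        rw [hB.det_eq_prod_eigenvalues]
        simp [hlam]
      have hpp : (0:ℝ) < ∏ i, lam i := Finset.prod_pos fun i _ => hlampos i
      have hdpos : (0:ℤ) < (Aᵀ * A : Matrix (Fin n) (Fin n) ℤ).det := by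
        have : (0:ℝ) < (((Aᵀ * A : Matrix (Fin n) (Fin n) ℤ).det : ℤ) : ℝ) := by
          rw [← hdet, hdetprod]; exact hpp
        exact_mod_cast this
      have hd1 : (1:ℤ) ≤ (Aᵀ * A : Matrix (Fin n) (Fin n) ℤ).det := hdpos
      calc (1:ℝ) ≤ (((Aᵀ * A : Matrix (Fin n) (Fin n) ℤ).det : ℤ) : ℝ) := by exact_mod_cast hd1
        _ = ∏ i, lam i := by rw [← hdet, hdetprod]
    -- min eigenvalue
    have hne : (Finset.univ : Finset (Fin n)).Nonempty := by
      have : Nonempty (Fin n) := ⟨⟨0, hn⟩⟩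
      exact Finset.univ_nonempty
    obtain ⟨i0, -, hi0⟩ := Finset.exists_min_image Finset.univ lam hne
    -- sigmaMax bound
    have hsmax : sigmaMax A' ≤ Real.sqrt S := by
      rw [sigmaMax]
      apply Real.sSup_le
      · rintro y ⟨x, hx, rfl⟩
        have h2 := (frobenius_bound A' hx).trans hfro
        have h3 := Real.sqrt_le_sqrt h2
        rwa [Real.sqrt_sq (norm_nonneg _)] at h3
      · exact Real.sqrt_nonneg _
    -- sigmaMin bound
    have hsmin : Real.sqrt (lam i0) ≤ sigmaMin A' := by
      rw [sigmaMin]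
      apply le_csInf
      · refine Set.Nonempty.image _ ⟨EuclideanSpace.single ⟨0,hn⟩ (1:ℝ), ?_⟩
        simp [EuclideanSpace.norm_single]
      · rintro y ⟨x, hx, rfl⟩
        have hq : lam i0 ≤ ‖Matrix.toEuclideanLin A' x‖^2 := by
          rw [normsq_eq_inner A' x, inner_eigen hB]
          have hc1 : ∑ j, (hB.eigenvectorBasis.repr x j)^2 = 1 := by
            have hnr : ‖hB.eigenvectorBasis.repr x‖ = 1 := by
              rw [LinearIsometryEquiv.norm_map]; exact hx
            exact sum_sq_of_unit hnr
          calc lam i0 = lam i0 * ∑ j, (hB.eigenvectorBasis.repr x j)^2 := by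
                rw [hc1, mul_one]
            _ = ∑ j, lam i0 * (hB.eigenvectorBasis.repr x j)^2 := Finset.mul_sum _ _ _
            _ ≤ ∑ j, lam j * (hB.eigenvectorBasis.repr x j)^2 :=
                Finset.sum_le_sum fun j _ =>
                  mul_le_mul_of_nonneg_right (hi0 j (Finset.mem_univ j)) (sq_nonneg _)
        have h3 := Real.sqrt_le_sqrt hq
        rwa [Real.sqrt_sq (norm_nonneg _)] at h3
    have hl0 : 0 < lam i0 := hlampos i0
    have hS0 : (0:ℝ) ≤ S := by positivity
    have hdiv : sigmaMax A' / sigmaMin A' ≤ Real.sqrt S / Real.sqrt (lam i0) :=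
      div_le_div₀ (Real.sqrt_nonneg _) hsmax (Real.sqrt_pos.mpr hl0) hsmin
    rw [← Real.sqrt_div hS0] at hdiv
    set P := ∏ i ∈ Finset.univ.erase i0, lam i with hP
    have hP0 : 0 < P := Finset.prod_pos fun i _ => hlampos i
    have h1P : 1 ≤ lam i0 * P := by
      rw [hP, Finset.mul_prod_erase Finset.univ lam (Finset.mem_univ i0)]
      exact hprod
    have hstep1 : S / lam i0 ≤ S * P := by
      rw [div_le_iff₀ hl0]
      nlinarith [mul_le_mul_of_nonneg_left h1P hS0]
    set c := (((n-1 : ℕ)):ℝ) with hc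
    have hstep2 : P ≤ (S / c) ^ (n-1) := by
      have hcard : (Finset.univ.erase i0).card = n - 1 := by
        rw [Finset.card_erase_of_mem (Finset.mem_univ i0), Finset.card_univ, Fintype.card_fin]
      have h1 := amgm (Finset.univ.erase i0) lam (fun i _ => (hlampos i).le)
      rw [hcard] at h1
      have hsumle : ∑ i ∈ Finset.univ.erase i0, lam i ≤ S := by
        refine le_trans (Finset.sum_le_sum_of_subset_of_nonneg (Finset.subset_univ _)
          (fun i _ _ => (hlampos i).le)) ?_
        rw [htrace]; exact hfro
      refine h1.trans ?_
      have hbase : (0:ℝ) ≤ (∑ i ∈ Finset.univ.erase i0, lam i) / c :=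
        div_nonneg (Finset.sum_nonneg fun i _ => (hlampos i).le) (by rw [hc]; positivity)
      apply pow_le_pow_left₀ hbase
      have hcinv : (0:ℝ) ≤ c⁻¹ := by rw [hc]; positivity
      rw [div_eq_mul_inv, div_eq_mul_inv]
      exact mul_le_mul_of_nonneg_right hsumle hcinv
    have hchain : S / lam i0 ≤ S * (S/c)^(n-1) := by
      calc S / lam i0 ≤ S * P := hstep1
        _ ≤ S * (S/c)^(n-1) := mul_le_mul_of_nonneg_left hstep2 hS0
    have hfinal : S * (S/c)^(n-1)
        ≤ ((n : ℝ) ^ ((n : ℝ) / 4 + 1 / 2) * (m : ℝ) ^ ((n : ℝ) / 2) * H ^ n)^2 := by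
      have hn0 : (0:ℝ) < (n:ℝ) := by exact_mod_cast hn
      have hm0 : (0:ℝ) < (m:ℝ) := by exact_mod_cast hm1
      have hrsq : ((n : ℝ) ^ ((n : ℝ) / 4 + 1 / 2) * (m : ℝ) ^ ((n : ℝ) / 2) * H ^ n)^2
          = (n:ℝ) ^ ((n:ℝ)/2 + 1) * (m:ℝ) ^ (n:ℕ) * H ^ (2*n) := by
        rw [mul_pow, mul_pow]
        congr 1
        · congr 1
          · rw [← Real.rpow_natCast ((n:ℝ) ^ ((n : ℝ) / 4 + 1 / 2)) 2,
              ← Real.rpow_mul hn0.le]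
            congr 1; ring
          · rw [← Real.rpow_natCast ((m:ℝ) ^ ((n : ℝ) / 2)) 2, ← Real.rpow_mul hm0.le,
              ← Real.rpow_natCast (m:ℝ) n]
            congr 1; ring
        · rw [← pow_mul, mul_comm n 2]
      rw [hrsq]
      have hcmn : c = (n:ℝ) - 1 := by
        rw [hc]; push_cast [hn]; ring
      have hc0 : (0:ℝ) < c^(n-1) := by
        rcases Nat.lt_or_ge n 2 with h2 | h2
        · have : n = 1 := by omega
          subst this; norm_num
        · have : (0:ℝ) < c := by
            rw [hcmn]
            have : (2:ℝ) ≤ (n:ℝ) := by exact_mod_cast h2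
            linarith
          positivity
      have hLHS : S * (S/c)^(n-1) = S^n / c^(n-1) := by
        rw [div_pow, ← mul_div_assoc]
        congr 1
        rw [← pow_succ']
        congr 1
        omega
      rw [hLHS, div_le_iff₀ hc0]
      have hSn : S^n = (n:ℝ)^n * ((m:ℝ)^n * H^(2*n)) := by
        rw [hS, mul_pow, mul_pow, ← pow_mul]
        ring
      rw [hSn]
      have hkey := key_ineq n hn
      rw [← hcmn] at hkey
      calc (n:ℝ)^n * ((m:ℝ)^n * H^(2*n))
          ≤ ((n:ℝ) ^ ((n:ℝ)/2 + 1) * c^(n-1)) * ((m:ℝ)^n * H^(2*n)) :=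
            mul_le_mul_of_nonneg_right hkey (by positivity)
        _ = (n:ℝ) ^ ((n:ℝ)/2 + 1) * (m:ℝ)^(n:ℕ) * H^(2*n) * c^(n-1) := by ring
    have hRHS0 : (0:ℝ) ≤ (n : ℝ) ^ ((n : ℝ) / 4 + 1 / 2) * (m : ℝ) ^ ((n : ℝ) / 2) * H ^ n := by
      positivity
    calc sigmaMax A' / sigmaMin A' ≤ Real.sqrt (S / lam i0) := hdiv
      _ ≤ Real.sqrt (S * (S/c)^(n-1)) := Real.sqrt_le_sqrt hchain
      _ ≤ Real.sqrt (((n : ℝ) ^ ((n : ℝ) / 4 + 1 / 2) * (m : ℝ) ^ ((n : ℝ) / 2) * H ^ n)^2) :=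
          Real.sqrt_le_sqrt hfinal
      _ = (n : ℝ) ^ ((n : ℝ) / 4 + 1 / 2) * (m : ℝ) ^ ((n : ℝ) / 2) * H ^ n :=
          Real.sqrt_sq hRHS0
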